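/- Let b, b' ∈ k be nonzero and let r, r' be integers. There exists a nonzero Laurent series g ∈ k((u)) with b·u^r·g = b'·u^{r'}·g^p if and only if r ≡ r' (mod p−1) and b/b' is a (p−1)-st power in k^× (i.e., there exists nonzero x ∈ k with x^{p−1}·b' = b). -/

import Mathlib

lemma leadingCoeff_mul' {Γ R : Type*} [AddCommMonoid Γ] [LinearOrder Γ] [IsOrderedCancelAddMonoid Γ]
    [Ring R] [IsDomain R] (x y : HahnSeries Γ R) :
    (x * y).leadingCoeff = x.leadingCoeff * y.leadingCoeff := by
  rcases eq_or_ne x 0 with rfl | hx; · simp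
  rcases eq_or_ne y 0 with rfl | hy; · simp
  rw [HahnSeries.leadingCoeff_eq, HahnSeries.order_mul hx hy,
    HahnSeries.coeff_mul_order_add_order]

lemma leadingCoeff_pow' {Γ R : Type*} [AddCommMonoid Γ] [LinearOrder Γ] [IsOrderedCancelAddMonoid Γ]
    [Ring R] [IsDomain R] (x : HahnSeries Γ R) (n : ℕ) :
    (x ^ n).leadingCoeff = x.leadingCoeff ^ n := by
  induction n with
  | zero => simp [HahnSeries.leadingCoeff_one]
  | succ n ih => rw [pow_succ, leadingCoeff_mul', ih, pow_succ]

theorem rank_one_BK_generic_iso_iff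
    (p : ℕ) (hp : p.Prime) (k : Type*) [Field k] [CharP k p]
    (b b' : k) (hb : b ≠ 0) (hb' : b' ≠ 0) (r r' : ℤ) :
    (∃ g : LaurentSeries k, g ≠ 0 ∧
        HahnSeries.single (0 : ℤ) b * HahnSeries.single r (1 : k) * g
          = HahnSeries.single (0 : ℤ) b' * HahnSeries.single r' (1 : k) * g ^ p) ↔
      (((p : ℤ) - 1) ∣ (r - r') ∧ ∃ x : k, x ≠ 0 ∧ x ^ (p - 1) * b' = b) := by
  have hp1 : p - 1 + 1 = p := Nat.succ_pred_eq_of_pos hp.pos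
  constructor
  · rintro ⟨g, hg0, heq⟩
    rw [HahnSeries.single_mul_single, HahnSeries.single_mul_single, zero_add, zero_add,
      mul_one, mul_one] at heq
    have hgp : g ^ p ≠ 0 := pow_ne_zero _ hg0
    have hs : (HahnSeries.single r b : LaurentSeries k) ≠ 0 := HahnSeries.single_ne_zero hb
    have hs' : (HahnSeries.single r' b' : LaurentSeries k) ≠ 0 := HahnSeries.single_ne_zero hb'
    have hord := congrArg HahnSeries.order heq
    rw [HahnSeries.order_mul hs hg0, HahnSeries.order_mul hs' hgp,
      HahnSeries.order_single hb, HahnSeries.order_single hb',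
      HahnSeries.order_pow] at hord
    have hlead := congrArg HahnSeries.leadingCoeff heq
    rw [leadingCoeff_mul', leadingCoeff_mul', leadingCoeff_pow',
      HahnSeries.leadingCoeff_of_single, HahnSeries.leadingCoeff_of_single] at hlead
    set L := g.leadingCoeff with hL
    have hLne : L ≠ 0 := HahnSeries.leadingCoeff_ne_zero.mpr hg0
    refine ⟨⟨g.order, ?_⟩, L, hLne, ?_⟩
    · have : r + g.order = r' + (p : ℤ) * g.order := by
        simpa [nsmul_eq_mul] using hord
      push_cast [nsmul_eq_mul] at this
      linarith
    · have : b * L = b' * (L ^ (p - 1) * L) := by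
        rw [← pow_succ, hp1]; exact hlead
      exact mul_right_cancel₀ hLne (by rw [this]; ring)
  · rintro ⟨⟨m, hm⟩, x, hx, hxb⟩
    refine ⟨HahnSeries.single m x, HahnSeries.single_ne_zero hx, ?_⟩
    rw [HahnSeries.single_pow, HahnSeries.single_mul_single, HahnSeries.single_mul_single,
      HahnSeries.single_mul_single, HahnSeries.single_mul_single]
    have hidx : (0:ℤ) + r + m = 0 + r' + p • m := by
      simp only [nsmul_eq_mul]; push_cast; linear_combination hm
    rw [hidx]
    congr 1
    rw [mul_one, mul_one, ← hp1, pow_succ, ← hxb]; ring
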